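/- The full hyperbolic component of the Lagrangian descriptor grows exponentially with the integration time, with asymptotics lim_{τ→∞} e^{−γλτ} M^h_γ(τ) = (λ^{γ−1}/(γ 2^{γ−1}))(|A|^γ + |B|^γ); in particular the leading-order coefficient vanishes in its A-part exactly on the stable manifold (A = 0, i.e. p₁⁰ = −q₁⁰) and in its B-part exactly on the unstable manifold (B = 0, i.e. p₁⁰ = q₁⁰). -/

import Mathlib

open Filter intervalIntegral

private lemma myRpowSubadd {γ : ℝ} (h0 : 0 ≤ γ) (h1 : γ ≤ 1) {a b : ℝ}
    (ha : 0 ≤ a) (hb : 0 ≤ b) : (a + b) ^ γ ≤ a ^ γ + b ^ γ := by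
  have h := NNReal.rpow_add_le_add_rpow a.toNNReal b.toNNReal h0 h1
  have h2 := NNReal.coe_le_coe.mpr h
  push_cast at h2
  rwa [Real.coe_toNNReal a ha, Real.coe_toNNReal b hb] at h2

private lemma myAbsAddRpowLe {γ : ℝ} (h0 : 0 ≤ γ) (h1 : γ ≤ 1) (x y : ℝ) :
    |x + y| ^ γ ≤ |x| ^ γ + |y| ^ γ :=
  le_trans (Real.rpow_le_rpow (abs_nonneg _) (abs_add_le x y) h0)
    (myRpowSubadd h0 h1 (abs_nonneg _) (abs_nonneg _))

private lemma myAbsRpowLe {γ : ℝ} (h0 : 0 ≤ γ) (h1 : γ ≤ 1) (x y : ℝ) :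
    |x| ^ γ ≤ |x + y| ^ γ + |y| ^ γ := by
  have h2 : |x| ≤ |x + y| + |y| := by
    calc |x| = |(x + y) + (-y)| := by ring_nf
    _ ≤ |x + y| + |(-y)| := abs_add_le _ _
    _ = |x + y| + |y| := by rw [abs_neg]
  calc |x| ^ γ ≤ (|x + y| + |y|) ^ γ := Real.rpow_le_rpow (abs_nonneg _) h2 h0
  _ ≤ _ := myRpowSubadd h0 h1 (abs_nonneg _) (abs_nonneg _)

private lemma myTwoBounds {γ : ℝ} (h0 : 0 ≤ γ) (h1 : γ ≤ 1) (x y : ℝ) :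
    |x + y| ^ γ + |x - y| ^ γ ≤ 2 * (|x| ^ γ + |y| ^ γ) ∧
    2 * |x| ^ γ - 2 * |y| ^ γ ≤ |x + y| ^ γ + |x - y| ^ γ ∧
    2 * |y| ^ γ - 2 * |x| ^ γ ≤ |x + y| ^ γ + |x - y| ^ γ := by
  have h2 := myAbsAddRpowLe h0 h1 x y
  have h3 := myAbsAddRpowLe h0 h1 x (-y)
  rw [← sub_eq_add_neg, abs_neg] at h3
  have h4 := myAbsRpowLe h0 h1 x y
  have h5 := myAbsRpowLe h0 h1 x (-y)
  rw [← sub_eq_add_neg, abs_neg] at h5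
  have h6 := myAbsRpowLe h0 h1 y x
  rw [show y + x = x + y from add_comm y x] at h6
  have h7 := myAbsRpowLe h0 h1 (-y) x
  rw [neg_add_eq_sub, abs_neg] at h7
  exact ⟨by linarith, by linarith, by linarith⟩

private lemma myIntegralExpMul (k s r : ℝ) (hk : k ≠ 0) :
    ∫ t in s..r, Real.exp (k * t) = (Real.exp (k * r) - Real.exp (k * s)) / k := by
  have D : ∀ x : ℝ, HasDerivAt (fun y : ℝ => Real.exp (k * y) / k) (Real.exp (k * x)) x := by
    intro x
    have h1 : HasDerivAt (fun y : ℝ => k * y) k x := by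
      simpa using (hasDerivAt_id x).const_mul k
    have h2 := ((Real.hasDerivAt_exp (k * x)).comp x h1).div_const k
    simpa [mul_div_cancel_right₀ _ hk] using h2
  rw [intervalIntegral.integral_eq_sub_of_hasDerivAt (fun x _ => D x)
    ((Real.continuous_exp.comp (continuous_const.mul continuous_id)).intervalIntegrable s r)]
  ring

private lemma myContAbsRpow {γ : ℝ} (h0 : 0 < γ) {g : ℝ → ℝ} (hg : Continuous g) :
    Continuous fun t => |g t| ^ γ := by
  rw [continuous_iff_continuousAt]
  intro x
  exact (Real.continuousAt_rpow_const _ _ (Or.inr h0.le)).comp hg.abs.continuousAt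

theorem stmt_8 (lam : ℝ) (hlam : 0 < lam) (q₁0 p₁0 : ℝ) (A B : ℝ)
    (hA : A = q₁0 + p₁0) (hB : B = q₁0 - p₁0)
    (γ : ℝ) (hγ : γ ∈ Set.Ioc (0 : ℝ) 1)
    (Mh : ℝ → ℝ)
    (hMh : ∀ τ : ℝ, Mh τ =
      ∫ t in (-τ)..τ,
        (|lam / 2 * (A * Real.exp (lam * t) - B * Real.exp (-(lam * t)))| ^ γ +
         |lam / 2 * (A * Real.exp (lam * t) + B * Real.exp (-(lam * t)))| ^ γ)) :
    Filter.Tendsto (fun τ : ℝ => Real.exp (-(γ * lam * τ)) * Mh τ) Filter.atTop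
      (nhds (lam ^ (γ - 1) / (γ * (2 : ℝ) ^ (γ - 1)) * (|A| ^ γ + |B| ^ γ))) ∧
    (|A| ^ γ = 0 ↔ p₁0 = -q₁0) ∧
    (|B| ^ γ = 0 ↔ p₁0 = q₁0) := by
  obtain ⟨hγ0, hγ1⟩ := hγ
  have hγne : γ ≠ 0 := hγ0.ne'
  have part2 : (|A| ^ γ = 0 ↔ p₁0 = -q₁0) := by
    rw [Real.rpow_eq_zero (abs_nonneg _) hγne, abs_eq_zero, hA]
    constructor <;> intro h <;> linarith
  have part3 : (|B| ^ γ = 0 ↔ p₁0 = q₁0) := by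
    rw [Real.rpow_eq_zero (abs_nonneg _) hγne, abs_eq_zero, hB]
    constructor <;> intro h <;> linarith
  refine ⟨?_, part2, part3⟩
  set μ : ℝ := γ * lam with hμ
  have hμpos : 0 < μ := mul_pos hγ0 hlam
  have hcpos : 0 < lam / 2 := by positivity
  set cg : ℝ := (lam / 2) ^ γ with hcg
  have hcgpos : 0 < cg := Real.rpow_pos_of_pos hcpos γ
  set sA : ℝ := |A| ^ γ with hsAdef
  set sB : ℝ := |B| ^ γ with hsBdef
  have hsA : 0 ≤ sA := Real.rpow_nonneg (abs_nonneg _) _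
  have hsB : 0 ≤ sB := Real.rpow_nonneg (abs_nonneg _) _
  set a : ℝ → ℝ := fun t => sA * Real.exp (μ * t) with hadef
  set b : ℝ → ℝ := fun t => sB * Real.exp (-(μ * t)) with hbdef
  set F : ℝ → ℝ := fun t =>
      |lam / 2 * (A * Real.exp (lam * t) - B * Real.exp (-(lam * t)))| ^ γ +
      |lam / 2 * (A * Real.exp (lam * t) + B * Real.exp (-(lam * t)))| ^ γ with hFdef
  set G : ℝ → ℝ := fun t => 2 * cg * (a t + b t) with hGdef
  have hMh' : ∀ τ : ℝ, Mh τ = ∫ t in (-τ)..τ, F t := hMh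
  -- pointwise rewrites
  have habsA : ∀ t : ℝ, |A * Real.exp (lam * t)| ^ γ = a t := by
    intro t
    rw [hadef, abs_mul, abs_of_pos (Real.exp_pos _),
      Real.mul_rpow (abs_nonneg _) (Real.exp_pos _).le, ← Real.exp_mul, hsAdef]
    congr 2
    rw [hμ]; ring
  have habsB : ∀ t : ℝ, |B * Real.exp (-(lam * t))| ^ γ = b t := by
    intro t
    rw [hbdef, abs_mul, abs_of_pos (Real.exp_pos _),
      Real.mul_rpow (abs_nonneg _) (Real.exp_pos _).le, ← Real.exp_mul, hsBdef]
    congr 2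
    rw [hμ]; ring
  have hF_eq : ∀ t : ℝ, F t = cg * (|A * Real.exp (lam * t) + B * Real.exp (-(lam * t))| ^ γ +
      |A * Real.exp (lam * t) - B * Real.exp (-(lam * t))| ^ γ) := by
    intro t
    rw [hFdef]
    simp only
    rw [abs_mul, abs_mul, abs_of_pos hcpos,
      Real.mul_rpow hcpos.le (abs_nonneg _), Real.mul_rpow hcpos.le (abs_nonneg _), hcg]
    ring
  -- pointwise bounds
  have hFG_le : ∀ t : ℝ, F t ≤ G t := by
    intro t
    rw [hF_eq t, hGdef]
    have h := (myTwoBounds hγ0.le hγ1 (A * Real.exp (lam * t)) (B * Real.exp (-(lam * t)))).1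
    rw [habsA, habsB] at h
    calc cg * _ ≤ cg * (2 * (a t + b t)) := by
          apply mul_le_mul_of_nonneg_left h hcgpos.le
    _ = 2 * cg * (a t + b t) := by ring
  have hG_eval : ∀ t : ℝ, G t = 2 * cg * (a t + b t) := fun t => by rw [hGdef]
  have hGF_b : ∀ t : ℝ, G t - F t ≤ 4 * cg * b t := by
    intro t
    rw [hF_eq t, hG_eval t]
    have h := (myTwoBounds hγ0.le hγ1 (A * Real.exp (lam * t)) (B * Real.exp (-(lam * t)))).2.1
    rw [habsA, habsB] at h
    have h2 : 2 * (a t + b t) - (|A * Real.exp (lam * t) + B * Real.exp (-(lam * t))| ^ γ +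
        |A * Real.exp (lam * t) - B * Real.exp (-(lam * t))| ^ γ) ≤ 4 * b t := by linarith
    calc 2 * cg * (a t + b t) - cg * (|A * Real.exp (lam * t) + B * Real.exp (-(lam * t))| ^ γ +
        |A * Real.exp (lam * t) - B * Real.exp (-(lam * t))| ^ γ)
        = cg * (2 * (a t + b t) - (|A * Real.exp (lam * t) + B * Real.exp (-(lam * t))| ^ γ +
          |A * Real.exp (lam * t) - B * Real.exp (-(lam * t))| ^ γ)) := by ring
      _ ≤ cg * (4 * b t) := mul_le_mul_of_nonneg_left h2 hcgpos.le
      _ = 4 * cg * b t := by ring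
  have hGF_a : ∀ t : ℝ, G t - F t ≤ 4 * cg * a t := by
    intro t
    rw [hF_eq t, hG_eval t]
    have h := (myTwoBounds hγ0.le hγ1 (A * Real.exp (lam * t)) (B * Real.exp (-(lam * t)))).2.2
    rw [habsA, habsB] at h
    have h2 : 2 * (a t + b t) - (|A * Real.exp (lam * t) + B * Real.exp (-(lam * t))| ^ γ +
        |A * Real.exp (lam * t) - B * Real.exp (-(lam * t))| ^ γ) ≤ 4 * a t := by linarith
    calc 2 * cg * (a t + b t) - cg * (|A * Real.exp (lam * t) + B * Real.exp (-(lam * t))| ^ γ +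
        |A * Real.exp (lam * t) - B * Real.exp (-(lam * t))| ^ γ)
        = cg * (2 * (a t + b t) - (|A * Real.exp (lam * t) + B * Real.exp (-(lam * t))| ^ γ +
          |A * Real.exp (lam * t) - B * Real.exp (-(lam * t))| ^ γ)) := by ring
      _ ≤ cg * (4 * a t) := mul_le_mul_of_nonneg_left h2 hcgpos.le
      _ = 4 * cg * a t := by ring
  -- continuity / integrability
  have hFcont : Continuous F := by
    rw [hFdef]
    apply Continuous.add <;> exact myContAbsRpow hγ0 (by fun_prop)
  have hacont : Continuous a := by rw [hadef]; fun_prop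
  have hbcont : Continuous b := by rw [hbdef]; fun_prop
  have hGcont : Continuous G := by
    rw [hGdef]; exact continuous_const.mul (hacont.add hbcont)
  have hFi : ∀ s r : ℝ, IntervalIntegrable F MeasureTheory.volume s r :=
    fun s r => hFcont.intervalIntegrable s r
  have hGi : ∀ s r : ℝ, IntervalIntegrable G MeasureTheory.volume s r :=
    fun s r => hGcont.intervalIntegrable s r
  -- exponential integrals
  have e1 : ∀ s r : ℝ, (∫ t in s..r, Real.exp (μ * t)) =
      (Real.exp (μ * r) - Real.exp (μ * s)) / μ := fun s r => myIntegralExpMul μ s r hμpos.ne'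
  have e2 : ∀ s r : ℝ, (∫ t in s..r, Real.exp (-(μ * t))) =
      (Real.exp (-(μ * s)) - Real.exp (-(μ * r))) / μ := by
    intro s r
    have h := myIntegralExpMul (-μ) s r (neg_ne_zero.mpr hμpos.ne')
    simp only [neg_mul] at h
    rw [h, div_neg, ← neg_div, neg_sub]
  have hGint : ∀ τ : ℝ, (∫ t in (-τ)..τ, G t) =
      2 * cg * (sA + sB) * ((Real.exp (μ * τ) - Real.exp (-(μ * τ))) / μ) := by
    intro τ
    have hGsplit : G = fun t => (2 * cg * sA) * Real.exp (μ * t) +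
        (2 * cg * sB) * Real.exp (-(μ * t)) := by
      funext t; rw [hGdef, hadef, hbdef]; ring
    have hce1 : Continuous fun t : ℝ => Real.exp (μ * t) :=
      Real.continuous_exp.comp (continuous_const.mul continuous_id)
    have hce2 : Continuous fun t : ℝ => Real.exp (-(μ * t)) :=
      Real.continuous_exp.comp ((continuous_const.mul continuous_id).neg)
    rw [hGsplit]
    beta_reduce
    rw [intervalIntegral.integral_add (f := fun t => (2 * cg * sA) * Real.exp (μ * t))
        (g := fun t => (2 * cg * sB) * Real.exp (-(μ * t)))
        ((continuous_const.mul hce1).intervalIntegrable _ _)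
        ((continuous_const.mul hce2).intervalIntegrable _ _),
      intervalIntegral.integral_const_mul, intervalIntegral.integral_const_mul, e1, e2,
      mul_neg, neg_neg]
    field_simp
  -- integrability of const * exp helpers
  have hai : ∀ (C : ℝ) (s r : ℝ), IntervalIntegrable (fun t => C * a t) MeasureTheory.volume s r :=
    fun C s r => ((continuous_const.mul hacont).intervalIntegrable s r)
  have hbi : ∀ (C : ℝ) (s r : ℝ), IntervalIntegrable (fun t => C * b t) MeasureTheory.volume s r :=
    fun C s r => ((continuous_const.mul hbcont).intervalIntegrable s r)
  -- error bound
  have herr : ∀ τ : ℝ, 0 ≤ τ →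
      Mh τ ≤ (∫ t in (-τ)..τ, G t) ∧
      (∫ t in (-τ)..τ, G t) - Mh τ ≤ 4 * cg * (sA + sB) / μ := by
    intro τ hτ
    rw [hMh' τ]
    constructor
    · exact intervalIntegral.integral_mono_on (by linarith) (hFi _ _) (hGi _ _)
        (fun t _ => hFG_le t)
    · rw [← intervalIntegral.integral_sub (hGi _ _) (hFi _ _)]
      rw [← intervalIntegral.integral_add_adjacent_intervals
        (a := -τ) (b := 0) (c := τ) ((hGi _ _).sub (hFi _ _)) ((hGi _ _).sub (hFi _ _))]
      have h1 : (∫ t in (-τ)..(0:ℝ), (G t - F t)) ≤ ∫ t in (-τ)..(0:ℝ), 4 * cg * a t :=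
        intervalIntegral.integral_mono_on (by linarith) ((hGi _ _).sub (hFi _ _))
          (hai _ _ _) (fun t _ => hGF_a t)
      have h2 : (∫ t in (0:ℝ)..τ, (G t - F t)) ≤ ∫ t in (0:ℝ)..τ, 4 * cg * b t :=
        intervalIntegral.integral_mono_on (by linarith) ((hGi _ _).sub (hFi _ _))
          (hbi _ _ _) (fun t _ => hGF_b t)
      have h3 : (∫ t in (-τ)..(0:ℝ), 4 * cg * a t) ≤ 4 * cg * sA / μ := by
        have : (∫ t in (-τ)..(0:ℝ), 4 * cg * a t) =
            (4 * cg * sA) * ((Real.exp (μ * 0) - Real.exp (μ * (-τ))) / μ) := by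
          have : (fun t => 4 * cg * a t) = fun t => (4 * cg * sA) * Real.exp (μ * t) := by
            funext t; rw [hadef]; ring
          rw [this, intervalIntegral.integral_const_mul, e1]
        rw [this, mul_zero, Real.exp_zero]
        have hex : 0 < Real.exp (μ * (-τ)) := Real.exp_pos _
        have hnum : (1 - Real.exp (μ * (-τ))) / μ ≤ 1 / μ :=
          (div_le_div_iff_of_pos_right hμpos).mpr (by linarith)
        calc (4 * cg * sA) * ((1 - Real.exp (μ * (-τ))) / μ) ≤ (4 * cg * sA) * (1 / μ) := by
              apply mul_le_mul_of_nonneg_left hnum (by positivity)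
        _ = 4 * cg * sA / μ := by ring
      have h4 : (∫ t in (0:ℝ)..τ, 4 * cg * b t) ≤ 4 * cg * sB / μ := by
        have : (∫ t in (0:ℝ)..τ, 4 * cg * b t) =
            (4 * cg * sB) * ((Real.exp (-(μ * 0)) - Real.exp (-(μ * τ))) / μ) := by
          have : (fun t => 4 * cg * b t) = fun t => (4 * cg * sB) * Real.exp (-(μ * t)) := by
            funext t; rw [hbdef]; ring
          rw [this, intervalIntegral.integral_const_mul, e2]
        rw [this, mul_zero, neg_zero, Real.exp_zero]
        have hex : 0 < Real.exp (-(μ * τ)) := Real.exp_pos _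
        have hnum : (1 - Real.exp (-(μ * τ))) / μ ≤ 1 / μ :=
          (div_le_div_iff_of_pos_right hμpos).mpr (by linarith)
        calc (4 * cg * sB) * ((1 - Real.exp (-(μ * τ))) / μ) ≤ (4 * cg * sB) * (1 / μ) := by
              apply mul_le_mul_of_nonneg_left hnum (by positivity)
        _ = 4 * cg * sB / μ := by ring
      have : 4 * cg * sA / μ + 4 * cg * sB / μ = 4 * cg * (sA + sB) / μ := by ring
      linarith
  -- limits
  have hE : Tendsto (fun τ : ℝ => Real.exp (-(μ * τ))) atTop (nhds 0) :=
    Real.tendsto_exp_atBot.comp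
      (tendsto_neg_atTop_atBot.comp (tendsto_id.const_mul_atTop hμpos))
  set K : ℝ := 2 * cg * (sA + sB) / μ with hKdef
  have T1 : Tendsto (fun τ : ℝ => Real.exp (-(μ * τ)) * ∫ t in (-τ)..τ, G t) atTop (nhds K) := by
    have heq : ∀ τ : ℝ, Real.exp (-(μ * τ)) * (∫ t in (-τ)..τ, G t) =
        K - K * (Real.exp (-(μ * τ)) * Real.exp (-(μ * τ))) := by
      intro τ
      rw [hGint τ]
      have h1 : Real.exp (-(μ * τ)) * Real.exp (μ * τ) = 1 := by
        rw [← Real.exp_add]; simp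
      have expand : Real.exp (-(μ * τ)) *
          (2 * cg * (sA + sB) * ((Real.exp (μ * τ) - Real.exp (-(μ * τ))) / μ)) =
          (2 * cg * (sA + sB) / μ) * (Real.exp (-(μ * τ)) * Real.exp (μ * τ)) -
          (2 * cg * (sA + sB) / μ) * (Real.exp (-(μ * τ)) * Real.exp (-(μ * τ))) := by
        ring
      rw [expand, h1, hKdef]
      ring
    have h : Tendsto (fun τ : ℝ => K - K * (Real.exp (-(μ * τ)) * Real.exp (-(μ * τ))))
        atTop (nhds (K - K * (0 * 0))) :=
      Tendsto.sub tendsto_const_nhds ((hE.mul hE).const_mul K)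
    simp only [mul_zero, sub_zero] at h
    exact h.congr fun τ => (heq τ).symm
  have T2 : Tendsto (fun τ : ℝ => Real.exp (-(μ * τ)) * ((∫ t in (-τ)..τ, G t) - Mh τ))
      atTop (nhds 0) := by
    apply squeeze_zero' (g := fun τ : ℝ => Real.exp (-(μ * τ)) * (4 * cg * (sA + sB) / μ))
    · filter_upwards [eventually_ge_atTop (0:ℝ)] with τ hτ
      exact mul_nonneg (Real.exp_pos _).le (by linarith [(herr τ hτ).1])
    · filter_upwards [eventually_ge_atTop (0:ℝ)] with τ hτ
      exact mul_le_mul_of_nonneg_left (herr τ hτ).2 (Real.exp_pos _).le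
    · have h := hE.mul_const (4 * cg * (sA + sB) / μ)
      simpa using h
  have final := T1.sub T2
  rw [sub_zero] at final
  have final2 : Tendsto (fun τ : ℝ => Real.exp (-(μ * τ)) * Mh τ) atTop (nhds K) :=
    final.congr fun τ => by ring
  have hKL : K = lam ^ (γ - 1) / (γ * (2:ℝ) ^ (γ - 1)) * (sA + sB) := by
    have hd : (lam / 2) ^ γ = lam ^ γ / (2:ℝ) ^ γ :=
      Real.div_rpow hlam.le (by norm_num : (0:ℝ) ≤ 2) γ
    have h2 : lam ^ (γ - 1) = lam ^ γ / lam := by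
      rw [Real.rpow_sub hlam, Real.rpow_one]
    have h3 : (2:ℝ) ^ (γ - 1) = (2:ℝ) ^ γ / 2 := by
      rw [Real.rpow_sub (by norm_num), Real.rpow_one]
    rw [hKdef, hcg, hd, h2, h3, hμ]
    have hlγ : (0:ℝ) < lam ^ γ := Real.rpow_pos_of_pos hlam γ
    have h2γ : (0:ℝ) < (2:ℝ) ^ γ := Real.rpow_pos_of_pos (by norm_num) γ
    field_simp
  rw [hKL] at final2
  exact final2.congr fun τ => by rw [hμ]
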